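/- Let β̂ := σᵤ/√(ΔΣ₀) and let ε > 0 satisfy ε < β̂ and εσᵤ²/((β̂ − ε)³ΔΣ₀) < 2. Then for every real β with 0 < |β − β̂| < ε one has |T(β) − β̂| ≤ (σᵤ²/(2(β̂ − ε)³ΔΣ₀))·(β − β̂)², and consequently |T(β) − β̂| ≤ ρ·|β − β̂| with ρ := εσᵤ²/(2(β̂ − ε)³ΔΣ₀) < 1. -/

import Mathlib

/-- The one-period policy-iteration map `T(β) = (β² Sig0 Δ + σu²)/(2 Δ β Sig0)`. -/
noncomputable def T1p (Δ σu Sig0 β : ℝ) : ℝ :=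
  (β ^ 2 * Sig0 * Δ + σu ^ 2) / (2 * Δ * β * Sig0)

/-- Quadratic local contraction bound: with `β̂ := σu/√(Δ Sig0)` and `ε > 0`
satisfying `ε < β̂` and `ε σu²/((β̂ - ε)³ Δ Sig0) < 2`, every `β` with
`0 < |β - β̂| < ε` satisfies `|T(β) - β̂| ≤ (σu²/(2(β̂-ε)³ Δ Sig0)) (β - β̂)²`, and
consequently `|T(β) - β̂| ≤ ρ |β - β̂|` with `ρ := ε σu²/(2(β̂-ε)³ Δ Sig0) < 1`. -/
theorem one_period_contraction_bound (Δ σu Sig0 : ℝ) (hΔ : 0 < Δ) (hσ : 0 < σu)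
    (hSig : 0 < Sig0) (ε : ℝ) (hε : 0 < ε)
    (hεsmall : ε < σu / Real.sqrt (Δ * Sig0))
    (hεcond : ε * σu ^ 2 / ((σu / Real.sqrt (Δ * Sig0) - ε) ^ 3 * Δ * Sig0) < 2)
    (β : ℝ) (hlow : 0 < |β - σu / Real.sqrt (Δ * Sig0)|)
    (hhigh : |β - σu / Real.sqrt (Δ * Sig0)| < ε) :
    |T1p Δ σu Sig0 β - σu / Real.sqrt (Δ * Sig0)| ≤
      σu ^ 2 / (2 * (σu / Real.sqrt (Δ * Sig0) - ε) ^ 3 * Δ * Sig0) *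
        (β - σu / Real.sqrt (Δ * Sig0)) ^ 2 ∧
    |T1p Δ σu Sig0 β - σu / Real.sqrt (Δ * Sig0)| ≤
      ε * σu ^ 2 / (2 * (σu / Real.sqrt (Δ * Sig0) - ε) ^ 3 * Δ * Sig0) *
        |β - σu / Real.sqrt (Δ * Sig0)| ∧
    ε * σu ^ 2 / (2 * (σu / Real.sqrt (Δ * Sig0) - ε) ^ 3 * Δ * Sig0) < 1 := by
  have hDS : (0:ℝ) < Δ * Sig0 := mul_pos hΔ hSig
  have hs : 0 < Real.sqrt (Δ * Sig0) := Real.sqrt_pos.mpr hDS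
  set s := Real.sqrt (Δ * Sig0) with hsdef
  have hs2 : s ^ 2 = Δ * Sig0 := Real.sq_sqrt hDS.le
  set b := σu / s with hbdef
  have hb : 0 < b := div_pos hσ hs
  have hb2 : b ^ 2 * (Δ * Sig0) = σu ^ 2 := by
    rw [hbdef, div_pow, hs2]
    field_simp
  have hbe : 0 < b - ε := sub_pos.mpr hεsmall
  have hβlow : b - ε < β := by
    have := abs_lt.mp hhigh
    linarith [this.1]
  have hβ : 0 < β := lt_trans hbe hβlow
  -- key identity
  have hkey : T1p Δ σu Sig0 β - b = (β - b) ^ 2 / (2 * β) := by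
    rw [T1p]
    rw [div_sub' (by positivity : (2 * Δ * β * Sig0) ≠ 0)]
    rw [div_eq_div_iff (by positivity) (by positivity)]
    nlinarith [hb2]
  have habs : |T1p Δ σu Sig0 β - b| = (β - b) ^ 2 / (2 * β) := by
    rw [hkey, abs_of_nonneg (by positivity)]
  have hD : 0 < (b - ε) ^ 3 * Δ * Sig0 := by positivity
  -- first bound
  have h1 : |T1p Δ σu Sig0 β - b| ≤
      σu ^ 2 / (2 * (b - ε) ^ 3 * Δ * Sig0) * (β - b) ^ 2 := by
    rw [habs, div_le_iff₀ (by positivity), div_mul_eq_mul_div,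
      div_mul_eq_mul_div, le_div_iff₀ (by positivity)]
    have hsq : (β - b) ^ 2 ≥ 0 := sq_nonneg _
    rw [← hb2]
    nlinarith [sq_nonneg (b - ε), mul_pos hbe hbe, sq_nonneg (β - b),
      mul_nonneg (sq_nonneg (β - b)) (mul_pos hDS (mul_pos hbe hbe)).le,
      mul_nonneg (mul_nonneg hsq hDS.le) (sub_nonneg.mpr hβlow.le),
      mul_nonneg (mul_nonneg (mul_nonneg hsq hDS.le) hβ.le)
        (mul_nonneg (sub_nonneg.mpr (show b - ε ≤ b by linarith)) (by linarith : (0:ℝ) ≤ b + (b - ε)))]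
  have hC : 0 ≤ σu ^ 2 / (2 * (b - ε) ^ 3 * Δ * Sig0) := by positivity
  refine ⟨h1, ?_, ?_⟩
  · calc |T1p Δ σu Sig0 β - b| ≤ σu ^ 2 / (2 * (b - ε) ^ 3 * Δ * Sig0) * (β - b) ^ 2 := h1
      _ ≤ σu ^ 2 / (2 * (b - ε) ^ 3 * Δ * Sig0) * (ε * |β - b|) := by
          apply mul_le_mul_of_nonneg_left _ hC
          calc (β - b) ^ 2 = |β - b| * |β - b| := (abs_mul_abs_self (β - b)).symm ▸ (sq (β - b)) ▸ rfl
            _ ≤ ε * |β - b| := mul_le_mul_of_nonneg_right hhigh.le (abs_nonneg _)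
      _ = ε * σu ^ 2 / (2 * (b - ε) ^ 3 * Δ * Sig0) * |β - b| := by ring
  · rw [div_lt_one (by positivity)]
    rw [div_lt_iff₀ hD] at hεcond
    linarith
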